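/- With the hypotheses of the canonical augmentation setup: if Z and W are isomorphic, both generated by canonical augmentation (i.e., (Z,p(Z)) ≅ (Z,m(Z)) and (W,p(W)) ≅ (W,m(W))), and additionally p(Z) = p(W) = X, then there exists a ∈ Aut(X) with a·Z = W. -/
import Mathlib

/-- If Z ≅ W are both generated by canonical augmentation and share the same
parent X, then some automorphism of X maps Z to W. -/
theorem canonical_augmentation_siblings_related_by_aut {G Ω : Type*} [Group G]
    [MulAction G Ω] (nr : Set Ω) (p m : nr → Ω)
    (hm : ∀ X Y : nr,
      (∃ g : G, g • (X : Ω) = (Y : Ω) ∧ g • m X = m Y) ↔ (∃ g : G, g • (X : Ω) = (Y : Ω)))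
    (Z W : nr) (X : Ω)
    (hZW : ∃ g : G, g • (Z : Ω) = (W : Ω))
    (hZ : ∃ g : G, g • (Z : Ω) = (Z : Ω) ∧ g • p Z = m Z)
    (hW : ∃ g : G, g • (W : Ω) = (W : Ω) ∧ g • p W = m W)
    (hpZ : p Z = X) (hpW : p W = X) :
    ∃ a : G, a • X = X ∧ a • (Z : Ω) = (W : Ω) := by
  obtain ⟨g, hg1, hg2⟩ := (hm Z W).mpr hZW
  obtain ⟨gz, hz1, hz2⟩ := hZ
  obtain ⟨gw, hw1, hw2⟩ := hW
  refine ⟨gw⁻¹ * g * gz, ?_, ?_⟩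
  · have : gw⁻¹ • m W = X := by
      rw [← hpW, ← hw2, inv_smul_smul]
    simp only [mul_smul]
    rw [hpZ] at hz2
    rw [hz2, hg2, this]
  · simp only [mul_smul]
    rw [hz1, hg1, inv_smul_eq_iff]; exact hw1.symm
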